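/- Let H(x,y) = y²/2 + x²/2 + x⁴/4. Then x⁶ y dx = (4/3·H·x² + 32/21·x² − 16/21·H)·y dx + (2/3·x³y − 8/7·x y)·dH − d(2/9·x³y³ − 8/21·x y³) as polynomial 1-forms on ℝ². -/

import Mathlib

/-- partial derivative in the first variable -/
noncomputable def pdx (F : ℝ → ℝ → ℝ) (x y : ℝ) : ℝ := deriv (fun t => F t y) x

/-- partial derivative in the second variable -/
noncomputable def pdy (F : ℝ → ℝ → ℝ) (x y : ℝ) : ℝ := deriv (fun t => F x t) y

noncomputable def H (x y : ℝ) : ℝ := y^2/2 + x^2/2 + x^4/4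

/-- (i4):  x⁶y dx = (4/3·H·x² + 32/21·x² − 16/21·H)·y dx + (2/3·x³y − 8/7·xy)·dH
    − d(2/9·x³y³ − 8/21·xy³) -/
theorem decomposition_i4 : ∀ x y : ℝ,
    x^6 * y = (4/3 * H x y * x^2 + 32/21 * x^2 - 16/21 * H x y) * y
      + (2/3 * x^3 * y - 8/7 * x * y) * pdx H x y
      - pdx (fun x y => 2/9 * x^3 * y^3 - 8/21 * x * y^3) x y
  ∧ (0 : ℝ) = (2/3 * x^3 * y - 8/7 * x * y) * pdy H x y
      - pdy (fun x y => 2/9 * x^3 * y^3 - 8/21 * x * y^3) x y := by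
  intro x y
  have h1 : pdx H x y = x + x^3 := by
    simp only [pdx, H]
    rw [show (fun t : ℝ => y^2/2 + t^2/2 + t^4/4) = (fun t : ℝ => y^2/2 + t^2/2 + t^4/4) from rfl]
    have : HasDerivAt (fun t : ℝ => y^2/2 + t^2/2 + t^4/4) (x + x^3) x := by
      have := ((hasDerivAt_pow 2 x).div_const 2).const_add (y^2/2) |>.add ((hasDerivAt_pow 4 x).div_const 4)
      exact this.congr_deriv (by norm_num)
    exact this.deriv
  have h2 : pdy H x y = y := by
    have : HasDerivAt (fun t : ℝ => t^2/2 + x^2/2 + x^4/4) y y := by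
      have := ((hasDerivAt_pow 2 y).div_const 2).add_const (x^2/2 + x^4/4)
      exact (this.congr_deriv (show ((2:ℕ):ℝ) * y^(2-1)/2 = y by norm_num)).congr_of_eventuallyEq
        (Filter.Eventually.of_forall fun t => by ring)
    exact this.deriv
  have h3 : pdx (fun x y => 2/9 * x^3 * y^3 - 8/21 * x * y^3) x y
      = 2/3 * x^2 * y^3 - 8/21 * y^3 := by
    have : HasDerivAt (fun t : ℝ => 2/9 * t^3 * y^3 - 8/21 * t * y^3)
        (2/3 * x^2 * y^3 - 8/21 * y^3) x := by
      have h := (((hasDerivAt_pow 3 x).const_mul (2/9 : ℝ)).mul_const (y^3)).sub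
        (((hasDerivAt_id x).const_mul (8/21 : ℝ)).mul_const (y^3))
      exact h.congr_deriv (by rw [show 3 - 1 = 2 from rfl]; push_cast; ring)
    exact this.deriv
  have h4 : pdy (fun x y => 2/9 * x^3 * y^3 - 8/21 * x * y^3) x y
      = 2/3 * x^3 * y^2 - 8/7 * x * y^2 := by
    have : HasDerivAt (fun t : ℝ => 2/9 * x^3 * t^3 - 8/21 * x * t^3)
        (2/3 * x^3 * y^2 - 8/7 * x * y^2) y := by
      have h := ((hasDerivAt_pow 3 y).const_mul (2/9 * x^3 : ℝ)).sub
        ((hasDerivAt_pow 3 y).const_mul (8/21 * x : ℝ))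
      have e : (fun t : ℝ => 2/9 * x^3 * t^3 - 8/21 * x * t^3)
          = fun t : ℝ => (2/9 * x^3) * t^3 - (8/21 * x) * t^3 := by ext t; ring
      rw [e]
      exact h.congr_deriv (by norm_num [Nat.sub_self]; ring_nf)
    exact this.deriv
  rw [h1, h2, h3, h4]
  constructor <;> [skip; ring]
  simp only [H]; ring
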